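/- Fix a market with unit demand d = 1, a truthful preference profile ≻, a distinguished agent 1 with ≻_1-most-preferred object a and misreport ≻'_1, an MPS eating profile e for ≻ and an MPS eating profile e' for ≻' = (≻'_1, (≻_i)_{i≠1}). For t ∈ [0,1] define μ_{-1,a}(t,e) = ∫_0^t |{i ∈ N, i ≠ 1 : e_i(s) = a}| ds and likewise μ_{-1,a}(t,e'). If t_a < t'_a, then μ_{-1,a}(t_a, e) ≤ μ_{-1,a}(t_a, e'). -/

import Mathlib

open MeasureTheory Finset
open scoped Classical

/-- The amount of probability of objects in `S` consumed up to time `t`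
under the eating profile `e`:  `μ_S(t,e) = ∫_0^t |{i : e_i(s) ∈ S}| ds`. -/
noncomputable def eatenAmt {N O : Type*} [Fintype N]
    (e : N → ℝ → O) (S : Set O) (t : ℝ) : ℝ :=
  ∫ s in (0:ℝ)..t, ((Finset.univ.filter (fun i => e i s ∈ S)).card : ℝ)

/-- The final allocation of the eating profile `e`:
`μ_{ij} = ∫_0^1 1{e_i(s) = j} ds`. -/
noncomputable def finalAlloc {N O : Type*} (e : N → ℝ → O) (i : N) (j : O) : ℝ :=
  ∫ s in (0:ℝ)..1, (if e i s = j then (1:ℝ) else 0)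

/-- `f` is a right-continuous step function on `[0,1)`: there is a finite set
of breakpoints, and `f` is constant on the stretches between them. -/
def RightContStep {O : Type*} (f : ℝ → O) : Prop :=
  ∃ B : Finset ℝ, ∀ t ∈ Set.Ico (0:ℝ) 1, ∀ s ∈ Set.Ico (0:ℝ) 1,
    t ≤ s → (∀ b ∈ B, ¬ (t < b ∧ b ≤ s)) → f s = f t

/-- Object `j` satisfies the capacity condition (Cap) at `(t,e)`. -/
def CapOK {N O : Type*} [Fintype N] (c : O → ℕ)
    (e : N → ℝ → O) (j : O) (t : ℝ) : Prop :=
  eatenAmt e {j} t < c j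

/-- Object `j` satisfies the global minimums condition (Global) at `(t,e)`. -/
def GlobalOK {N O : Type*} [Fintype N] [Fintype O] (m : O → ℕ)
    (e : N → ℝ → O) (j : O) (t : ℝ) : Prop :=
  ∃ ε > 0, max (m j : ℝ) (eatenAmt e {j} t + ε) +
      ∑ k ∈ Finset.univ.erase j, max (m k : ℝ) (eatenAmt e {k} t) ≤
    (Fintype.card N : ℝ)

/-- Object `j` is available at `(t,e)`. -/
def Available {N O : Type*} [Fintype N] [Fintype O] (m c : O → ℕ)
    (e : N → ℝ → O) (j : O) (t : ℝ) : Prop :=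
  CapOK c e j t ∧ GlobalOK m e j t

/-- `e` is an MPS eating profile for the strict preference profile `P`:
each `e_i` is a right-continuous step function and, at every time
`t ∈ [0,1)`, `e_i(t)` is available and is `i`'s most preferred object among
the available ones. -/
def IsMPS {N O : Type*} [Fintype N] [Fintype O] (m c : O → ℕ)
    (P : N → O → O → Prop) (e : N → ℝ → O) : Prop :=
  (∀ i, RightContStep (e i)) ∧
  ∀ i, ∀ t ∈ Set.Ico (0:ℝ) 1,
    Available m c e (e i t) t ∧
    ∀ j, Available m c e j t → j ≠ e i t → P i (e i t) j

/-- The closing time `t_j` of object `j` under `e` (with `inf ∅ = 1`). -/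
noncomputable def closeTime {N O : Type*} [Fintype N] [Fintype O] (m c : O → ℕ)
    (e : N → ℝ → O) (j : O) : ℝ :=
  sInf ({t ∈ Set.Icc (0:ℝ) 1 | ¬ Available m c e j t} ∪ {1})

/-- The time `τ` at which the global minimums condition starts binding
under `e` (with `inf ∅ = 1`). -/
noncomputable def globalTime {N O : Type*} [Fintype N] [Fintype O] (m : O → ℕ)
    (e : N → ℝ → O) : ℝ :=
  sInf ({t ∈ Set.Icc (0:ℝ) 1 | ∃ j : O, ¬ GlobalOK m e j t} ∪ {1})

/-- `x` first-order stochastically dominates `y` for the strict preference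
`Pi`. -/
def FOSD {O : Type*} [Fintype O] (Pi : O → O → Prop) (x y : O → ℝ) : Prop :=
  ∀ o : O, ∑ j ∈ Finset.univ.filter (fun j => Pi j o ∨ j = o), y j ≤
    ∑ j ∈ Finset.univ.filter (fun j => Pi j o ∨ j = o), x j


lemma step_measurable {O : Type*} {f : ℝ → O} (hf : RightContStep f) (p : O → Prop) :
    MeasurableSet {s : ℝ | s ∈ Set.Ico (0:ℝ) 1 ∧ p (f s)} := by
  obtain ⟨B, hB⟩ := hf
  set B' : Finset ℝ := insert 0 (B.filter fun b => 0 < b ∧ b < 1) with hB'def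
  have hB'mem : ∀ b ∈ B', b ∈ Set.Ico (0:ℝ) 1 := by
    intro b hb
    rcases Finset.mem_insert.mp hb with h | h
    · subst h; exact ⟨le_refl _, one_pos⟩
    · obtain ⟨-, h1, h2⟩ := Finset.mem_filter.mp h
      exact ⟨h1.le, h2⟩
  have key : {s : ℝ | s ∈ Set.Ico (0:ℝ) 1 ∧ p (f s)} =
      ⋃ b ∈ B', (Set.Ico b 1 ∩ (⋂ b' ∈ B'.filter (fun b' => b < b'), Set.Iio b') ∩
        (if p (f b) then Set.univ else ∅)) := by
    ext s
    simp only [Set.mem_setOf_eq, Set.mem_iUnion, Set.mem_inter_iff, Set.mem_iInter,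
      Set.mem_Ico, Finset.mem_filter]
    constructor
    · rintro ⟨⟨hs0, hs1⟩, hps⟩
      have hne : (B'.filter fun b => b ≤ s).Nonempty :=
        ⟨0, Finset.mem_filter.mpr ⟨Finset.mem_insert_self _ _, hs0⟩⟩
      obtain ⟨b, hbmem, hbmax⟩ := Finset.exists_max_image _ id hne
      obtain ⟨hbB', hbs⟩ := Finset.mem_filter.mp hbmem
      have hnob : ∀ b' ∈ B', b < b' → ¬ b' ≤ s := by
        intro b' hb' hlt hle
        exact absurd (hbmax b' (Finset.mem_filter.mpr ⟨hb', hle⟩)) (not_le.mpr hlt)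
      have hfs : f s = f b := by
        apply hB b (hB'mem b hbB') s ⟨hs0, hs1⟩ hbs
        intro c hc ⟨hc1, hc2⟩
        have hcB' : c ∈ B' := Finset.mem_insert_of_mem
          (Finset.mem_filter.mpr ⟨hc, lt_of_le_of_lt (hB'mem b hbB').1 hc1,
            lt_of_le_of_lt hc2 hs1⟩)
        exact hnob c hcB' hc1 hc2
      refine ⟨b, hbB', ⟨⟨hbs, hs1⟩, ?_⟩, ?_⟩
      · rintro b' ⟨hb'1, hb'2⟩
        exact lt_of_not_ge (hnob b' hb'1 hb'2)
      · rw [if_pos (hfs ▸ hps)]; trivial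
    · rintro ⟨b, hbB', ⟨⟨hbs, hs1⟩, hgap⟩, hcond⟩
      by_cases hp : p (f b)
      swap
      · rw [if_neg hp] at hcond; exact absurd hcond (Set.notMem_empty s)
      have hs0 : (0:ℝ) ≤ s := le_trans (hB'mem b hbB').1 hbs
      have hfs : f s = f b := by
        apply hB b (hB'mem b hbB') s ⟨hs0, hs1⟩ hbs
        intro c hc ⟨hc1, hc2⟩
        have hcB' : c ∈ B' := Finset.mem_insert_of_mem
          (Finset.mem_filter.mpr ⟨hc, lt_of_le_of_lt (hB'mem b hbB').1 hc1,
            lt_of_le_of_lt hc2 hs1⟩)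
        exact absurd (hgap c ⟨hcB', hc1⟩) (not_lt.mpr hc2)
      exact ⟨⟨hs0, hs1⟩, hfs ▸ hp⟩
  rw [key]
  apply MeasurableSet.biUnion (Finset.countable_toSet _)
  intro b _
  apply MeasurableSet.inter
  · apply MeasurableSet.inter measurableSet_Ico
    exact MeasurableSet.biInter (Finset.countable_toSet _) (fun _ _ => measurableSet_Iio)
  · split_ifs
    · exact MeasurableSet.univ
    · exact MeasurableSet.empty

lemma indicator_one_integrableOn {S : Set ℝ} (hS : MeasurableSet S) (u v : ℝ) :
    IntegrableOn (S.indicator fun _ => (1:ℝ)) (Set.Ioc u v) volume := by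
  apply Measure.integrableOn_of_bounded (M := 1)
  · rw [Real.volume_Ioc]; exact ENNReal.ofReal_ne_top
  · exact (measurable_const.indicator hS).aestronglyMeasurable
  · filter_upwards with s
    by_cases hs : s ∈ S <;> simp [Set.indicator, hs]

lemma if_integrable_aux {q : ℝ → Prop}
    (hS : MeasurableSet {s : ℝ | s ∈ Set.Ico (0:ℝ) 1 ∧ q s}) {u v : ℝ}
    (hu : 0 ≤ u) (hv : v ≤ 1) (huv : u ≤ v) :
    IntervalIntegrable (fun s => if q s then (1:ℝ) else 0) volume u v := by
  rw [intervalIntegrable_iff_integrableOn_Ioc_of_le huv]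
  have hgint := indicator_one_integrableOn hS u v
  apply hgint.congr
  have h1 : ∀ᵐ s : ℝ ∂volume, s ≠ 1 := by
    rw [MeasureTheory.ae_iff]
    convert Real.volume_singleton (a := 1) using 2
    ext s; simp
  have key : ∀ᵐ s ∂(volume.restrict (Set.Ioc u v)),
      ({s : ℝ | s ∈ Set.Ico (0:ℝ) 1 ∧ q s}.indicator (fun _ => (1:ℝ))) s =
        (if q s then (1:ℝ) else 0) := by
    rw [MeasureTheory.ae_restrict_iff' measurableSet_Ioc]
    filter_upwards [h1] with s hs1 hsuv
    have hs01 : s ∈ Set.Ico (0:ℝ) 1 :=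
      ⟨le_trans hu hsuv.1.le, lt_of_le_of_ne (le_trans hsuv.2 hv) hs1⟩
    by_cases hp : q s
    · simp [Set.indicator, hp, hs01.1, hs01.2]
    · simp [Set.indicator, hp]
  exact key

lemma integrable_pred_card {N O : Type*} [Fintype N] {e : N → ℝ → O}
    (he : ∀ i, RightContStep (e i)) (p : N → O → Prop) {u v : ℝ}
    (hu : 0 ≤ u) (hv : v ≤ 1) (huv : u ≤ v) :
    IntervalIntegrable (fun s => ((Finset.univ.filter fun i => p i (e i s)).card : ℝ))
      volume u v := by
  have hrw : (fun s => ((Finset.univ.filter fun i => p i (e i s)).card : ℝ)) =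
      ∑ i : N, (fun s => if p i (e i s) then (1:ℝ) else 0) := by
    funext s
    rw [Finset.sum_apply, Finset.card_filter]
    push_cast
    rfl
  rw [hrw]
  exact IntervalIntegrable.sum Finset.univ
    (fun i _ => if_integrable_aux (step_measurable (he i) (p i)) hu hv huv)

lemma integrable_pred_card' {N O : Type*} [Fintype N] {e : N → ℝ → O}
    (he : ∀ i, RightContStep (e i)) (p : N → O → Prop)
    (inst : ∀ s : ℝ, DecidablePred (fun i : N => p i (e i s))) {u v : ℝ}
    (hu : 0 ≤ u) (hv : v ≤ 1) (huv : u ≤ v) :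
    IntervalIntegrable
      (fun s => ((@Finset.filter N (fun i => p i (e i s)) (inst s) Finset.univ).card : ℝ))
      volume u v := by
  have heq : (fun s => ((@Finset.filter N (fun i => p i (e i s)) (inst s)
      Finset.univ).card : ℝ)) =
      (fun s => ((@Finset.filter N (fun i => p i (e i s))
        (fun a => Classical.propDecidable (p a (e a s))) Finset.univ).card : ℝ)) := by
    funext s
    congr
  have h2 := integrable_pred_card he p hu hv huv
  rwa [← heq] at h2


lemma ae_ne_real (t : ℝ) : ∀ᵐ s : ℝ ∂volume, s ≠ t := by
  rw [MeasureTheory.ae_iff]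
  convert Real.volume_singleton (a := t) using 2
  ext s; simp

lemma eaten_integrable {N O : Type*} [Fintype N] {e : N → ℝ → O}
    (he : ∀ i, RightContStep (e i)) (S : Set O) {u v : ℝ}
    (hu : 0 ≤ u) (hv : v ≤ 1) (huv : u ≤ v) :
    IntervalIntegrable (fun s => ((Finset.univ.filter (fun i => e i s ∈ S)).card : ℝ))
      volume u v :=
  integrable_pred_card he (fun _ o => o ∈ S) hu hv huv

lemma eaten_zero {N O : Type*} [Fintype N] (e : N → ℝ → O) (S : Set O) :
    eatenAmt e S 0 = 0 :=
  intervalIntegral.integral_same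

lemma eaten_split {N O : Type*} [Fintype N] {e : N → ℝ → O}
    (he : ∀ i, RightContStep (e i)) (S : Set O) {t₁ t₂ : ℝ}
    (h0 : 0 ≤ t₁) (h12 : t₁ ≤ t₂) (h21 : t₂ ≤ 1) :
    eatenAmt e S t₂ = eatenAmt e S t₁ +
      ∫ s in t₁..t₂, ((Finset.univ.filter (fun i => e i s ∈ S)).card : ℝ) := by
  rw [eatenAmt, eatenAmt]
  rw [← intervalIntegral.integral_add_adjacent_intervals
    (eaten_integrable he S le_rfl (h12.trans h21) h0)
    (eaten_integrable he S h0 h21 h12)]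

lemma eaten_mono {N O : Type*} [Fintype N] {e : N → ℝ → O}
    (he : ∀ i, RightContStep (e i)) (S : Set O) {t₁ t₂ : ℝ}
    (h0 : 0 ≤ t₁) (h12 : t₁ ≤ t₂) (h21 : t₂ ≤ 1) :
    eatenAmt e S t₁ ≤ eatenAmt e S t₂ := by
  rw [eaten_split he S h0 h12 h21]
  have : (0:ℝ) ≤ ∫ s in t₁..t₂, ((Finset.univ.filter (fun i => e i s ∈ S)).card : ℝ) :=
    intervalIntegral.integral_nonneg h12 (fun u _ => by positivity)
  linarith

lemma eaten_nonneg {N O : Type*} [Fintype N] {e : N → ℝ → O}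
    (he : ∀ i, RightContStep (e i)) (S : Set O) {t : ℝ}
    (h0 : 0 ≤ t) (h1 : t ≤ 1) : 0 ≤ eatenAmt e S t := by
  have := eaten_mono he S le_rfl h0 h1
  rwa [eaten_zero] at this

lemma eaten_lipschitz {N O : Type*} [Fintype N] {e : N → ℝ → O}
    (he : ∀ i, RightContStep (e i)) (S : Set O) {t₁ t₂ : ℝ}
    (h0 : 0 ≤ t₁) (h12 : t₁ ≤ t₂) (h21 : t₂ ≤ 1) :
    eatenAmt e S t₂ ≤ eatenAmt e S t₁ + (Fintype.card N : ℝ) * (t₂ - t₁) := by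
  rw [eaten_split he S h0 h12 h21]
  have hb : (∫ s in t₁..t₂, ((Finset.univ.filter (fun i => e i s ∈ S)).card : ℝ))
      ≤ ∫ _ in t₁..t₂, (Fintype.card N : ℝ) := by
    apply intervalIntegral.integral_mono_on h12 (eaten_integrable he S h0 h21 h12)
      intervalIntegrable_const
    intro x _
    exact_mod_cast Nat.cast_le.mpr ((Finset.card_filter_le _ _).trans
      (le_of_eq (Finset.card_univ)))
  rw [intervalIntegral.integral_const] at hb
  have : (t₂ - t₁) • (Fintype.card N : ℝ) = (Fintype.card N : ℝ) * (t₂ - t₁) := by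
    rw [smul_eq_mul]; ring
  linarith [hb, this ▸ hb]


section Lemmas

variable {N O : Type*} [Fintype N] [Fintype O]

lemma avail_mono {m c : O → ℕ} {e : N → ℝ → O} (he : ∀ i, RightContStep (e i))
    {j : O} {t₁ t₂ : ℝ} (h0 : 0 ≤ t₁) (h12 : t₁ ≤ t₂) (h21 : t₂ ≤ 1)
    (h : Available m c e j t₂) : Available m c e j t₁ := by
  obtain ⟨hcap, ε, hε, hglob⟩ := h
  constructor
  · exact lt_of_le_of_lt (eaten_mono he _ h0 h12 h21) hcap
  · refine ⟨ε, hε, le_trans (add_le_add ?_ ?_) hglob⟩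
    · exact max_le_max le_rfl (by linarith [eaten_mono he ({j} : Set O) h0 h12 h21])
    · exact Finset.sum_le_sum fun k _ =>
        max_le_max le_rfl (eaten_mono he ({k} : Set O) h0 h12 h21)

lemma closeTime_nonneg (m c : O → ℕ) (e : N → ℝ → O) (j : O) :
    0 ≤ closeTime m c e j := by
  apply le_csInf ⟨(1:ℝ), Or.inr rfl⟩
  rintro x (⟨⟨hx, -⟩, -⟩ | hx)
  · exact hx
  · rw [Set.mem_singleton_iff] at hx; rw [hx]; exact zero_le_one

lemma closeTime_bddBelow (m c : O → ℕ) (e : N → ℝ → O) (j : O) :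
    BddBelow ({t ∈ Set.Icc (0:ℝ) 1 | ¬ Available m c e j t} ∪ {1}) := by
  refine ⟨0, ?_⟩
  rintro x (⟨⟨hx, -⟩, -⟩ | hx)
  · exact hx
  · rw [Set.mem_singleton_iff] at hx; rw [hx]; exact zero_le_one

lemma closeTime_le_one (m c : O → ℕ) (e : N → ℝ → O) (j : O) :
    closeTime m c e j ≤ 1 :=
  csInf_le (closeTime_bddBelow m c e j) (Or.inr rfl)

lemma avail_of_lt_closeTime {m c : O → ℕ} {e : N → ℝ → O} {j : O} {s : ℝ}
    (h0 : 0 ≤ s) (hs : s < closeTime m c e j) : Available m c e j s := by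
  by_contra h
  have hmem : s ∈ ({t ∈ Set.Icc (0:ℝ) 1 | ¬ Available m c e j t} ∪ {1}) :=
    Or.inl ⟨⟨h0, le_trans hs.le (closeTime_le_one m c e j)⟩, h⟩
  exact absurd (csInf_le (closeTime_bddBelow m c e j) hmem) (not_le.mpr hs)

end Lemmas

section Lemmas2

variable {N O : Type*} [Fintype N] [Fintype O]

lemma eaten_le_cap {m c : O → ℕ} {P : N → O → O → Prop} {e : N → ℝ → O}
    (hMPS : IsMPS m c P e) (j : O) {t : ℝ} (ht0 : 0 ≤ t) (ht1 : t ≤ 1) :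
    eatenAmt e {j} t ≤ (c j : ℝ) := by
  obtain ⟨hstep, hmps⟩ := hMPS
  by_contra hcon
  rw [not_le] at hcon
  set A : Set ℝ := {u | u ∈ Set.Icc (0:ℝ) 1 ∧ (c j : ℝ) < eatenAmt e {j} u} with hAdef
  have htA : t ∈ A := ⟨⟨ht0, ht1⟩, hcon⟩
  have hAne : A.Nonempty := ⟨t, htA⟩
  have hAbdd : BddBelow A := ⟨0, fun x hx => hx.1.1⟩
  set z : ℝ := sInf A with hzdef
  have hz0 : 0 ≤ z := le_csInf hAne (fun x hx => hx.1.1)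
  have hzt : z ≤ t := csInf_le hAbdd htA
  have hz1 : z ≤ 1 := hzt.trans ht1
  set K : ℝ := (Fintype.card N : ℝ) with hKdef
  have hK0 : (0:ℝ) ≤ K := Nat.cast_nonneg _
  have hK1 : (0:ℝ) < K + 1 := by linarith
  -- Step 1 : c j ≤ eatenAmt e {j} z
  have hstep1 : (c j : ℝ) ≤ eatenAmt e {j} z := by
    by_contra hlt
    rw [not_le] at hlt
    set η : ℝ := (c j : ℝ) - eatenAmt e {j} z with hηdef
    have hη : 0 < η := by simp only [hηdef]; linarith
    have hδ : 0 < η / (K + 1) := div_pos hη hK1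
    obtain ⟨t', ht'A, ht'lt⟩ := (csInf_lt_iff hAbdd hAne).mp
      (show sInf A < z + η / (K + 1) by rw [← hzdef]; linarith)
    have hzt' : z ≤ t' := csInf_le hAbdd ht'A
    have hlip := eaten_lipschitz hstep ({j} : Set O) hz0 hzt' ht'A.1.2
    have hKδ : K * (η / (K + 1)) < η := by
      have h1 : K * (η / (K + 1)) = (K * η) / (K + 1) := by ring
      rw [h1, div_lt_iff₀ hK1]
      nlinarith
    have hKmono : K * (t' - z) ≤ K * (η / (K + 1)) := by
      apply mul_le_mul_of_nonneg_left _ hK0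
      linarith
    have := ht'A.2
    simp only [hηdef] at hKδ
    linarith
  -- Step 2 : eatenAmt e {j} z ≤ c j
  have hstep2 : eatenAmt e {j} z ≤ (c j : ℝ) := by
    rcases eq_or_lt_of_le hz0 with hz | hz
    · rw [← hz, eaten_zero]; positivity
    · by_contra hlt
      rw [not_le] at hlt
      set η : ℝ := eatenAmt e {j} z - (c j : ℝ) with hηdef
      have hη : 0 < η := by simp only [hηdef]; linarith
      have hδ : 0 < η / (K + 1) := div_pos hη hK1
      set s : ℝ := max 0 (z - η / (K + 1)) with hsdef
      have hs0 : 0 ≤ s := le_max_left _ _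
      have hsz : s < z := by
        rw [hsdef]; apply max_lt hz; linarith
      have hszd : z - s ≤ η / (K + 1) := by
        rw [hsdef]; have := le_max_right 0 (z - η / (K + 1)); linarith
      have hsA : s ∉ A := notMem_of_lt_csInf hsz hAbdd
      have hsle : eatenAmt e {j} s ≤ (c j : ℝ) := by
        by_contra hc2
        exact hsA ⟨⟨hs0, hsz.le.trans hz1⟩, not_le.mp hc2⟩
      have hlip := eaten_lipschitz hstep ({j} : Set O) hs0 hsz.le hz1
      have hKδ : K * (η / (K + 1)) < η := by
        have h1 : K * (η / (K + 1)) = (K * η) / (K + 1) := by ring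
        rw [h1, div_lt_iff₀ hK1]
        nlinarith
      have hKmono : K * (z - s) ≤ K * (η / (K + 1)) :=
        mul_le_mul_of_nonneg_left hszd hK0
      simp only [hηdef] at hKδ
      linarith
  have hz_eq : eatenAmt e {j} z = (c j : ℝ) := le_antisymm hstep2 hstep1
  -- Step 3 : the rate of j is zero after z, so eatenAmt stays at c j
  have hzltt : z < t := by
    rcases eq_or_lt_of_le hzt with h | h
    · exfalso; rw [h] at hz_eq; exact absurd hz_eq (ne_of_gt htA.2)
    · exact h
  have hrate : ∀ u ∈ Set.Ioo z t,
      ((Finset.univ.filter (fun i => e i u ∈ ({j} : Set O))).card : ℝ) = 0 := by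
    intro u ⟨hu1, hu2⟩
    have hu0 : 0 ≤ u := hz0.trans hu1.le
    have hu1' : u < 1 := lt_of_lt_of_le hu2 ht1
    have hmono := eaten_mono hstep ({j} : Set O) hz0 hu1.le (le_of_lt hu1')
    rw [hz_eq] at hmono
    norm_cast
    rw [Finset.card_eq_zero, Finset.filter_eq_empty_iff]
    intro i _
    rw [Set.mem_singleton_iff]
    intro hij
    have hav := (hmps i u ⟨hu0, hu1'⟩).1
    rw [hij] at hav
    exact absurd hav.1 (not_lt.mpr hmono)
  have hint : (∫ s in z..t, ((Finset.univ.filter (fun i => e i s ∈ ({j} : Set O))).card : ℝ))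
      = 0 := by
    rw [← intervalIntegral.integral_zero (a := z) (b := t) (μ := volume) (E := ℝ)]
    apply intervalIntegral.integral_congr_ae
    filter_upwards [ae_ne_real t] with u hut humem
    rw [Set.uIoc_of_le hzt] at humem
    exact hrate u ⟨humem.1, lt_of_le_of_ne humem.2 hut⟩
  have := eaten_split hstep ({j} : Set O) hz0 hzt ht1
  rw [hz_eq] at this
  have h0 : eatenAmt e {j} t = (c j : ℝ) := by
    rw [this]; convert add_zero (c j : ℝ) using 2; convert hint
  exact absurd h0 (ne_of_lt hcon).symm

end Lemmas2

section Lemmas3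

variable {N O : Type*} [Fintype N] [Fintype O]

/-- Total requirement `F(t) = ∑ₖ max(mₖ, μₖ(t))`. -/
noncomputable def totNeed (m : O → ℕ) (e : N → ℝ → O) (t : ℝ) : ℝ :=
  ∑ k : O, max (m k : ℝ) (eatenAmt e {k} t)

lemma totNeed_split (m : O → ℕ) (e : N → ℝ → O) (t : ℝ) (j : O) :
    totNeed m e t = max (m j : ℝ) (eatenAmt e {j} t) +
      ∑ k ∈ Finset.univ.erase j, max (m k : ℝ) (eatenAmt e {k} t) :=
  (Finset.add_sum_erase _ _ (Finset.mem_univ j)).symm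

lemma totNeed_mono {m : O → ℕ} {e : N → ℝ → O} (he : ∀ i, RightContStep (e i))
    {t₁ t₂ : ℝ} (h0 : 0 ≤ t₁) (h12 : t₁ ≤ t₂) (h21 : t₂ ≤ 1) :
    totNeed m e t₁ ≤ totNeed m e t₂ :=
  Finset.sum_le_sum fun k _ => max_le_max le_rfl (eaten_mono he ({k} : Set O) h0 h12 h21)

lemma totNeed_lipschitz {m : O → ℕ} {e : N → ℝ → O} (he : ∀ i, RightContStep (e i))
    {t₁ t₂ : ℝ} (h0 : 0 ≤ t₁) (h12 : t₁ ≤ t₂) (h21 : t₂ ≤ 1) :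
    totNeed m e t₂ ≤ totNeed m e t₁ +
      (Fintype.card O : ℝ) * ((Fintype.card N : ℝ) * (t₂ - t₁)) := by
  have hK : (0:ℝ) ≤ (Fintype.card N : ℝ) * (t₂ - t₁) := by
    have : (0:ℝ) ≤ (Fintype.card N : ℝ) := Nat.cast_nonneg _
    nlinarith
  have hterm : ∀ k : O, max (m k : ℝ) (eatenAmt e {k} t₂) ≤
      max (m k : ℝ) (eatenAmt e {k} t₁) + (Fintype.card N : ℝ) * (t₂ - t₁) := by
    intro k
    apply max_le
    · linarith [le_max_left (m k : ℝ) (eatenAmt e {k} t₁)]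
    · have := eaten_lipschitz he ({k} : Set O) h0 h12 h21
      linarith [le_max_right (m k : ℝ) (eatenAmt e {k} t₁)]
  calc totNeed m e t₂ ≤ ∑ k : O, (max (m k : ℝ) (eatenAmt e {k} t₁) +
        (Fintype.card N : ℝ) * (t₂ - t₁)) := Finset.sum_le_sum fun k _ => hterm k
    _ = totNeed m e t₁ + (Fintype.card O : ℝ) * ((Fintype.card N : ℝ) * (t₂ - t₁)) := by
        rw [Finset.sum_add_distrib, Finset.sum_const, Finset.card_univ, nsmul_eq_mul]
        rfl

lemma totNeed_le_card [Nonempty N] {m c : O → ℕ} {P : N → O → O → Prop}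
    {e : N → ℝ → O} (hMPS : IsMPS m c P e) {t : ℝ} (ht : t ∈ Set.Ico (0:ℝ) 1) :
    totNeed m e t ≤ (Fintype.card N : ℝ) := by
  obtain ⟨-, hmps⟩ := hMPS
  set i : N := Classical.arbitrary N
  obtain ⟨-, ε, hε, hle⟩ := (hmps i t ht).1
  rw [totNeed_split m e t (e i t)]
  refine le_trans (add_le_add ?_ le_rfl) hle
  exact max_le_max le_rfl (by linarith)

lemma notGlobalOK_iff [Nonempty N] {m c : O → ℕ} {P : N → O → O → Prop}
    {e : N → ℝ → O} (hMPS : IsMPS m c P e) (j : O) {t : ℝ} (ht : t ∈ Set.Ico (0:ℝ) 1) :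
    ¬ GlobalOK m e j t ↔
      (totNeed m e t = (Fintype.card N : ℝ) ∧ (m j : ℝ) ≤ eatenAmt e {j} t) := by
  have hcard := totNeed_le_card hMPS ht
  rw [totNeed_split m e t j] at hcard ⊢
  constructor
  · intro hng
    have hF : max (m j : ℝ) (eatenAmt e {j} t) +
        ∑ k ∈ Finset.univ.erase j, max (m k : ℝ) (eatenAmt e {k} t) ≥
        (Fintype.card N : ℝ) := by
      by_contra hlt
      rw [not_le] at hlt
      apply hng
      refine ⟨((Fintype.card N : ℝ) - (max (m j : ℝ) (eatenAmt e {j} t) +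
        ∑ k ∈ Finset.univ.erase j, max (m k : ℝ) (eatenAmt e {k} t))) / 2,
        by linarith, ?_⟩
      have h1 : max (m j : ℝ) (eatenAmt e {j} t +
          ((Fintype.card N : ℝ) - (max (m j : ℝ) (eatenAmt e {j} t) +
          ∑ k ∈ Finset.univ.erase j, max (m k : ℝ) (eatenAmt e {k} t))) / 2) ≤
          max (m j : ℝ) (eatenAmt e {j} t) +
          ((Fintype.card N : ℝ) - (max (m j : ℝ) (eatenAmt e {j} t) +
          ∑ k ∈ Finset.univ.erase j, max (m k : ℝ) (eatenAmt e {k} t))) / 2 := by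
        apply max_le
        · linarith [le_max_left (m j : ℝ) (eatenAmt e {j} t)]
        · linarith [le_max_right (m j : ℝ) (eatenAmt e {j} t)]
      linarith
    have hmle : (m j : ℝ) ≤ eatenAmt e {j} t := by
      by_contra hmlt
      rw [not_le] at hmlt
      apply hng
      refine ⟨(m j : ℝ) - eatenAmt e {j} t, by linarith, ?_⟩
      have h1 : max (m j : ℝ) (eatenAmt e {j} t + ((m j : ℝ) - eatenAmt e {j} t)) =
          (m j : ℝ) := by rw [add_sub_cancel]; exact max_eq_left le_rfl
      rw [h1]
      have h2 : max (m j : ℝ) (eatenAmt e {j} t) = (m j : ℝ) := max_eq_left hmlt.le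
      rw [h2] at hcard
      exact hcard
    refine ⟨le_antisymm hcard hF, hmle⟩
  · rintro ⟨hF, hm⟩ ⟨ε, hε, hle⟩
    have h1 : max (m j : ℝ) (eatenAmt e {j} t) = eatenAmt e {j} t := max_eq_right hm
    have h2 : eatenAmt e {j} t + ε ≤ max (m j : ℝ) (eatenAmt e {j} t + ε) :=
      le_max_right _ _
    linarith

end Lemmas3

set_option maxHeartbeats 3000000 in
/-- Lemma sp3: If agent `i₀`'s favorite object `a` closes
strictly earlier in the truthful run than in the misreport run, then the
consumption of `a` by the agents other than `i₀` up to time `t_a` is weakly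
larger in the misreport run. -/
theorem MPS_lemma_sp3
    {N O : Type*} [Fintype N] [Fintype O] [Nonempty N] [Nonempty O]
    (m c : O → ℕ)
    (hc1 : ∀ j, 1 ≤ c j) (hc2 : ∀ j, c j ≤ Fintype.card N)
    (hfeasc : Fintype.card N ≤ ∑ j, c j)
    (hfeasm : ∑ j, m j ≤ Fintype.card N)
    (P : N → O → O → Prop) (hP : ∀ i, IsStrictTotalOrder O (P i))
    (i₀ : N) (a : O) (ha : ∀ j : O, j ≠ a → P i₀ a j)
    (P₁' : O → O → Prop) (hP₁' : IsStrictTotalOrder O P₁')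
    (P' : N → O → O → Prop)
    (hP' : P' = fun i => if i = i₀ then P₁' else P i)
    (e e' : N → ℝ → O) (he : IsMPS m c P e) (he' : IsMPS m c P' e') :
    closeTime m c e a < closeTime m c e' a →
      (∫ s in (0:ℝ)..(closeTime m c e a),
          ((Finset.univ.filter (fun i : N => i ≠ i₀ ∧ e i s = a)).card : ℝ)) ≤
        ∫ s in (0:ℝ)..(closeTime m c e a),
          ((Finset.univ.filter (fun i : N => i ≠ i₀ ∧ e' i s = a)).card : ℝ) := by
  intro hlt
  obtain ⟨hstep, hmps⟩ := he
  obtain ⟨hstep', hmps'⟩ := he'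
  have he : IsMPS m c P e := ⟨hstep, hmps⟩
  have he' : IsMPS m c P' e' := ⟨hstep', hmps'⟩
  have h0ta : 0 ≤ closeTime m c e a := closeTime_nonneg m c e a
  have hta'1 : closeTime m c e' a ≤ 1 := closeTime_le_one m c e' a
  have hta1 : closeTime m c e a ≤ 1 := closeTime_le_one m c e a
  have htalt1 : closeTime m c e a < 1 := lt_of_lt_of_le hlt hta'1
  have hasym : ∀ (i : N) (x y : O), P i x y → P i y x → False := fun i x y h1 h2 =>
    (hP i).toIsStrictOrder.toIrrefl.irrefl x
      ((hP i).toIsStrictOrder.toIsTrans.trans x y x h1 h2)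
  have hP'i : ∀ i : N, i ≠ i₀ → P' i = P i := by
    intro i h; rw [hP']; simp [h]
  -- agent i₀ eats a at all times before `closeTime m c e a`
  have hea : ∀ s, 0 ≤ s → s < closeTime m c e a → e i₀ s = a := by
    intro s hs0 hsta
    have hava : Available m c e a s := avail_of_lt_closeTime hs0 hsta
    by_contra hne
    exact hasym i₀ a (e i₀ s) (ha _ hne)
      ((hmps i₀ s ⟨hs0, lt_of_lt_of_le hsta hta1⟩).2 a hava (Ne.symm hne))
  -- the availability-transfer invariant
  set Q : ℝ → Prop := fun t => ∀ j, Available m c e' j t → Available m c e j t with hQdef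
  -- the per-object consumption comparison, assuming the invariant below `t`
  have hμ : ∀ t, 0 ≤ t → t < closeTime m c e a → (∀ s, 0 ≤ s → s < t → Q s) →
      ∀ k, k ≠ a → Available m c e' k t → eatenAmt e {k} t ≤ eatenAmt e' {k} t := by
    intro t ht0 htta hQbelow k hka hkav
    have ht1 : t ≤ 1 := le_of_lt (lt_of_lt_of_le htta hta1)
    simp only [eatenAmt]
    apply intervalIntegral.integral_mono_ae_restrict ht0
      (eaten_integrable hstep _ le_rfl ht1 ht0)
      (eaten_integrable hstep' _ le_rfl ht1 ht0)
    apply (MeasureTheory.ae_restrict_iff' measurableSet_Icc).mpr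
    filter_upwards [ae_ne_real t] with u hut humem
    have hu0 : 0 ≤ u := humem.1
    have hut' : u < t := lt_of_le_of_ne humem.2 hut
    have huta : u < closeTime m c e a := lt_trans hut' htta
    have hu1 : u < 1 := lt_of_lt_of_le huta hta1
    apply Nat.cast_le.mpr
    apply Finset.card_le_card
    intro i hi
    rw [Finset.mem_filter, Set.mem_singleton_iff] at hi
    obtain ⟨-, hik⟩ := hi
    rw [Finset.mem_filter, Set.mem_singleton_iff]
    refine ⟨Finset.mem_univ i, ?_⟩
    have hii₀ : i ≠ i₀ := by
      intro hii
      rw [hii, hea u hu0 huta] at hik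
      exact hka hik.symm
    have hkavu : Available m c e' k u :=
      avail_mono hstep' hu0 hut'.le ht1 hkav
    by_contra hne
    have hbest' : P i (e' i u) k := by
      have := (hmps' i u ⟨hu0, hu1⟩).2 k hkavu (Ne.symm hne)
      rwa [hP'i i hii₀] at this
    have hav'e : Available m c e (e' i u) u :=
      hQbelow u hu0 hut' (e' i u) (hmps' i u ⟨hu0, hu1⟩).1
    have hbest : P i k (e' i u) := by
      have h2 := (hmps i u ⟨hu0, hu1⟩).2 (e' i u) hav'e
      rw [hik] at h2
      exact h2 hne
    exact hasym i k (e' i u) hbest hbest'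
  -- one induction step for the invariant
  have hQstep : ∀ t, 0 ≤ t → t < closeTime m c e a →
      (∀ s, 0 ≤ s → s < t → Q s) → Q t := by
    intro t ht0 htta hQbelow j havj'
    have ht1lt : t < 1 := lt_of_lt_of_le htta hta1
    have htIco : t ∈ Set.Ico (0:ℝ) 1 := ⟨ht0, ht1lt⟩
    by_cases hja : j = a
    · rw [hja]; exact avail_of_lt_closeTime ht0 htta
    by_contra hnav
    have hμj : eatenAmt e {j} t ≤ eatenAmt e' {j} t := hμ t ht0 htta hQbelow j hja havj'
    rcases not_and_or.mp hnav with hcap | hglob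
    · rw [CapOK, not_lt] at hcap
      exact absurd havj'.1 (not_lt.mpr (le_trans hcap hμj))
    · obtain ⟨hF, hmj⟩ := (notGlobalOK_iff he j htIco).mp hglob
      have haav : Available m c e a t := avail_of_lt_closeTime ht0 htta
      have hma : eatenAmt e {a} t < (m a : ℝ) := by
        by_contra hc2
        exact (not_not.mpr haav.2) ((notGlobalOK_iff he a htIco).mpr ⟨hF, not_lt.mp hc2⟩)
      have hF' : (Fintype.card N : ℝ) ≤ totNeed m e' t := by
        by_cases hex : ∃ k, ¬ GlobalOK m e' k t
        · obtain ⟨k, hk⟩ := hex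
          exact le_of_eq ((notGlobalOK_iff he' k htIco).mp hk).1.symm
        · push_neg at hex
          rw [← hF]
          apply Finset.sum_le_sum
          intro k _
          by_cases hkeqa : k = a
          · rw [hkeqa]
            calc max (m a : ℝ) (eatenAmt e {a} t) = (m a : ℝ) := max_eq_left hma.le
              _ ≤ max (m a : ℝ) (eatenAmt e' {a} t) := le_max_left _ _
          · have hkey : eatenAmt e {k} t ≤ eatenAmt e' {k} t := by
              by_cases hcap' : CapOK c e' k t
              · exact hμ t ht0 htta hQbelow k hkeqa ⟨hcap', hex k⟩
              · rw [CapOK, not_lt] at hcap'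
                exact le_trans (eaten_le_cap he k ht0 ht1lt.le) hcap'
            exact max_le_max le_rfl hkey
      have hF'eq : totNeed m e' t = (Fintype.card N : ℝ) :=
        le_antisymm (totNeed_le_card he' htIco) hF'
      exact absurd havj'.2
        ((notGlobalOK_iff he' j htIco).mpr ⟨hF'eq, le_trans hmj hμj⟩)
  -- real induction: the invariant holds everywhere below `closeTime m c e a`
  have hQall : ∀ t, 0 ≤ t → t < closeTime m c e a → Q t := by
    by_contra hcon
    push_neg at hcon
    obtain ⟨t₀, ht₀0, ht₀ta, ht₀Q⟩ := hcon
    set Abad : Set ℝ := {t : ℝ | 0 ≤ t ∧ t < closeTime m c e a ∧ ¬ Q t} with hAdef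
    have hAne : Abad.Nonempty := ⟨t₀, ht₀0, ht₀ta, ht₀Q⟩
    have hAbdd : BddBelow Abad := ⟨0, fun x hx => hx.1⟩
    set z : ℝ := sInf Abad with hzdef
    have hz0 : 0 ≤ z := le_csInf hAne (fun x hx => hx.1)
    have hzta : z < closeTime m c e a :=
      lt_of_le_of_lt (csInf_le hAbdd ⟨ht₀0, ht₀ta, ht₀Q⟩) ht₀ta
    have hz1 : z < 1 := lt_of_lt_of_le hzta hta1
    have hQbelow : ∀ s, 0 ≤ s → s < z → Q s := by
      intro s h1 h2
      by_contra hq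
      exact absurd (csInf_le hAbdd ⟨h1, lt_trans h2 hzta, hq⟩) (not_le.mpr h2)
    have hQz : Q z := hQstep z hz0 hzta hQbelow
    -- pigeonhole: some fixed object witnesses failure arbitrarily close above z
    have hpigeon : ∃ j : O, ∀ δ > (0:ℝ), ∃ t, z ≤ t ∧ t < z + δ ∧
        t < closeTime m c e a ∧ Available m c e' j t ∧ ¬ Available m c e j t := by
      by_contra hno
      push_neg at hno
      choose δf hδf hnb using hno
      have hne' : (Finset.univ : Finset O).Nonempty := Finset.univ_nonempty
      set δ : ℝ := Finset.univ.inf' hne' δf with hδdef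
      have hδpos : 0 < δ := by
        rw [hδdef, Finset.lt_inf'_iff]
        exact fun j _ => hδf j
      obtain ⟨t, htA, htlt⟩ := (csInf_lt_iff hAbdd hAne).mp
        (show sInf Abad < z + δ by rw [← hzdef]; linarith)
      have hzt : z ≤ t := csInf_le hAbdd htA
      obtain ⟨ht0', htta', htQ'⟩ := htA
      have htQ2 : ∃ j, Available m c e' j t ∧ ¬ Available m c e j t := by
        by_contra hforall
        push_neg at hforall
        exact htQ' hforall
      obtain ⟨j, hj1, hj2⟩ := htQ2
      have hδj : δ ≤ δf j := Finset.inf'_le _ (Finset.mem_univ j)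
      exact hj2 (hnb j t hzt (by linarith) htta' hj1)
    obtain ⟨j, hj⟩ := hpigeon
    -- j is available in e' at z, hence (invariant) available in e at z
    have hjz' : Available m c e' j z := by
      obtain ⟨t, hzt, -, htta, hav', -⟩ := hj 1 one_pos
      exact avail_mono hstep' hz0 hzt (le_of_lt (lt_of_lt_of_le htta hta1)) hav'
    have hjz : Available m c e j z := hQz j hjz'
    -- but then j stays available in e slightly beyond z : contradiction
    set K : ℝ := (Fintype.card N : ℝ) with hKdef
    have hK0 : (0:ℝ) ≤ K := Nat.cast_nonneg _
    set L : ℝ := (Fintype.card O : ℝ) * K with hLdef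
    have hL0 : (0:ℝ) ≤ L := by
      rw [hLdef]; positivity
    have hcapz : eatenAmt e {j} z < (c j : ℝ) := hjz.1
    have hglobz := hjz.2
    have hnotnot : ¬ (totNeed m e z = K ∧ (m j : ℝ) ≤ eatenAmt e {j} z) := by
      intro hcontra
      exact (not_not.mpr hglobz) ((notGlobalOK_iff he j ⟨hz0, hz1⟩).mpr hcontra)
    set ε₁ : ℝ := (c j : ℝ) - eatenAmt e {j} z with hε₁def
    have hε₁pos : 0 < ε₁ := by rw [hε₁def]; linarith
    -- in either case we get a positive margin ε₂ and the relevant bound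
    have hcases : (totNeed m e z < K) ∨ (eatenAmt e {j} z < (m j : ℝ)) := by
      rcases not_and_or.mp hnotnot with h | h
      · left
        exact lt_of_le_of_ne (totNeed_le_card he ⟨hz0, hz1⟩) h
      · right; exact not_le.mp h
    have hcontradiction : False := by
      rcases hcases with hG | hm
      · set ε₂ : ℝ := K - totNeed m e z with hε₂def
        have hε₂pos : 0 < ε₂ := by rw [hε₂def]; linarith
        set δ : ℝ := min (closeTime m c e a - z) (min (ε₁ / (K + 1)) (ε₂ / (L + 1)))
          with hδdef
        have hδpos : 0 < δ := by
          rw [hδdef]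
          apply lt_min (by linarith)
          exact lt_min (div_pos hε₁pos (by linarith)) (div_pos hε₂pos (by linarith))
        obtain ⟨t, hzt, htδ, htta, hav', hnav⟩ := hj δ hδpos
        have ht1 : t < 1 := lt_of_lt_of_le htta hta1
        apply hnav
        have htz1 : t - z ≤ ε₁ / (K + 1) := by
          have h1 : δ ≤ ε₁ / (K + 1) := le_trans (min_le_right _ _) (min_le_left _ _)
          linarith
        have htz2 : t - z ≤ ε₂ / (L + 1) := by
          have h1 : δ ≤ ε₂ / (L + 1) := le_trans (min_le_right _ _) (min_le_right _ _)
          linarith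
        have hlip := eaten_lipschitz hstep ({j} : Set O) hz0 hzt ht1.le
        have hlipF := totNeed_lipschitz (m := m) hstep hz0 hzt ht1.le
        have hKb : K * (t - z) < ε₁ := by
          have h2 : K * (t - z) ≤ K * (ε₁ / (K + 1)) :=
            mul_le_mul_of_nonneg_left htz1 hK0
          have h3 : K * (ε₁ / (K + 1)) < ε₁ := by
            rw [show K * (ε₁ / (K + 1)) = (K * ε₁) / (K + 1) by ring,
              div_lt_iff₀ (show (0:ℝ) < K + 1 by linarith)]
            nlinarith
          linarith
        have hLb : L * (t - z) < ε₂ := by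
          have h2 : L * (t - z) ≤ L * (ε₂ / (L + 1)) :=
            mul_le_mul_of_nonneg_left htz2 hL0
          have h3 : L * (ε₂ / (L + 1)) < ε₂ := by
            rw [show L * (ε₂ / (L + 1)) = (L * ε₂) / (L + 1) by ring,
              div_lt_iff₀ (show (0:ℝ) < L + 1 by linarith)]
            nlinarith
          linarith
        constructor
        · rw [CapOK]
          have : eatenAmt e {j} t ≤ eatenAmt e {j} z + K * (t - z) := hlip
          rw [hε₁def] at hKb
          linarith
        · by_contra hgt
          have := ((notGlobalOK_iff he j ⟨hz0.trans hzt, ht1⟩).mp hgt).1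
          have hFt : totNeed m e t ≤ totNeed m e z + L * (t - z) := by
            rw [hLdef]
            have := hlipF
            linarith [hlipF]
          rw [hε₂def] at hLb
          rw [this] at hFt
          linarith
      · set ε₂ : ℝ := (m j : ℝ) - eatenAmt e {j} z with hε₂def
        have hε₂pos : 0 < ε₂ := by rw [hε₂def]; linarith
        set δ : ℝ := min (closeTime m c e a - z) (min (ε₁ / (K + 1)) (ε₂ / (K + 1)))
          with hδdef
        have hδpos : 0 < δ := by
          rw [hδdef]
          apply lt_min (by linarith)
          exact lt_min (div_pos hε₁pos (by linarith)) (div_pos hε₂pos (by linarith))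
        obtain ⟨t, hzt, htδ, htta, hav', hnav⟩ := hj δ hδpos
        have ht1 : t < 1 := lt_of_lt_of_le htta hta1
        apply hnav
        have htz1 : t - z ≤ ε₁ / (K + 1) := by
          have h1 : δ ≤ ε₁ / (K + 1) := le_trans (min_le_right _ _) (min_le_left _ _)
          linarith
        have htz2 : t - z ≤ ε₂ / (K + 1) := by
          have h1 : δ ≤ ε₂ / (K + 1) := le_trans (min_le_right _ _) (min_le_right _ _)
          linarith
        have hlip := eaten_lipschitz hstep ({j} : Set O) hz0 hzt ht1.le
        have hKb1 : K * (t - z) < ε₁ := by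
          have h2 : K * (t - z) ≤ K * (ε₁ / (K + 1)) :=
            mul_le_mul_of_nonneg_left htz1 hK0
          have h3 : K * (ε₁ / (K + 1)) < ε₁ := by
            rw [show K * (ε₁ / (K + 1)) = (K * ε₁) / (K + 1) by ring,
              div_lt_iff₀ (show (0:ℝ) < K + 1 by linarith)]
            nlinarith
          linarith
        have hKb2 : K * (t - z) < ε₂ := by
          have h2 : K * (t - z) ≤ K * (ε₂ / (K + 1)) :=
            mul_le_mul_of_nonneg_left htz2 hK0
          have h3 : K * (ε₂ / (K + 1)) < ε₂ := by
            rw [show K * (ε₂ / (K + 1)) = (K * ε₂) / (K + 1) by ring,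
              div_lt_iff₀ (show (0:ℝ) < K + 1 by linarith)]
            nlinarith
          linarith
        constructor
        · rw [CapOK]
          rw [hε₁def] at hKb1
          linarith
        · by_contra hgt
          have hmle := ((notGlobalOK_iff he j ⟨hz0.trans hzt, ht1⟩).mp hgt).2
          rw [hε₂def] at hKb2
          linarith
    exact hcontradiction
  -- final step : compare the two integrals pointwise
  have hfinal : (∫ s in (0:ℝ)..(closeTime m c e a),
      ((Finset.univ.filter (fun i : N =>
        (fun (i : N) (o : O) => i ≠ i₀ ∧ o = a) i (e i s))).card : ℝ)) ≤
      ∫ s in (0:ℝ)..(closeTime m c e a),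
      ((Finset.univ.filter (fun i : N =>
        (fun (i : N) (o : O) => i ≠ i₀ ∧ o = a) i (e' i s))).card : ℝ) := by
    apply intervalIntegral.integral_mono_ae_restrict h0ta
      (integrable_pred_card' hstep (fun i o => i ≠ i₀ ∧ o = a) _ le_rfl hta1 h0ta)
      (integrable_pred_card' hstep' (fun i o => i ≠ i₀ ∧ o = a) _ le_rfl hta1 h0ta)
    apply (MeasureTheory.ae_restrict_iff' measurableSet_Icc).mpr
    filter_upwards [ae_ne_real (closeTime m c e a)] with u hut humem
    have hu0 : 0 ≤ u := humem.1
    have huta : u < closeTime m c e a := lt_of_le_of_ne humem.2 hut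
    have hu1 : u < 1 := lt_of_lt_of_le huta hta1
    apply Nat.cast_le.mpr
    apply Finset.card_le_card
    intro i hi
    rw [Finset.mem_filter] at hi
    obtain ⟨-, hii₀, hia⟩ := hi
    rw [Finset.mem_filter]
    refine ⟨Finset.mem_univ i, hii₀, ?_⟩
    have haav' : Available m c e' a u :=
      avail_of_lt_closeTime hu0 (lt_trans huta hlt)
    by_contra hne
    have hbest' : P i (e' i u) a := by
      have := (hmps' i u ⟨hu0, hu1⟩).2 a haav' (Ne.symm hne)
      rwa [hP'i i hii₀] at this
    have hav'e : Available m c e (e' i u) u :=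
      hQall u hu0 huta (e' i u) (hmps' i u ⟨hu0, hu1⟩).1
    have hbest : P i a (e' i u) := by
      have h2 := (hmps i u ⟨hu0, hu1⟩).2 (e' i u) hav'e
      rw [hia] at h2
      exact h2 hne
    exact hasym i a (e' i u) hbest hbest'
  calc (∫ s in (0:ℝ)..(closeTime m c e a),
        ((Finset.univ.filter (fun i : N => i ≠ i₀ ∧ e i s = a)).card : ℝ))
      = ∫ s in (0:ℝ)..(closeTime m c e a),
        ((Finset.univ.filter (fun i : N =>
          (fun (i : N) (o : O) => i ≠ i₀ ∧ o = a) i (e i s))).card : ℝ) := by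
        apply intervalIntegral.integral_congr
        intro u _
        congr
    _ ≤ ∫ s in (0:ℝ)..(closeTime m c e a),
        ((Finset.univ.filter (fun i : N =>
          (fun (i : N) (o : O) => i ≠ i₀ ∧ o = a) i (e' i s))).card : ℝ) := hfinal
    _ = ∫ s in (0:ℝ)..(closeTime m c e a),
        ((Finset.univ.filter (fun i : N => i ≠ i₀ ∧ e' i s = a)).card : ℝ) := by
        apply intervalIntegral.integral_congr
        intro u _
        congr
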